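/- Gradient of the log marginal likelihood in β: for the hierarchical Gaussian model with prior N(0, β⁻¹Σ) on ℝ^M (Σ symmetric positive definite) and likelihood N(d | û, σ²I), define L(β) = log ∫ p(d|û) N(û | 0, β⁻¹Σ) dû + log p(β). Then dL/dβ = M/(2β) + d(log p(β))/dβ − ½⟨m̃, Σ⁻¹ m̃⟩ − ½ tr(Σ⁻¹ Σ̃), where m̃ and Σ̃ are the posterior mean and covariance of û given d and β. -/

import Mathlib

open Real Matrix MeasureTheory


lemma gauss_one_dim {σ lam b : ℝ} (hσ : 0 < σ) (hlam : 0 < lam) (hb : 0 < b) (w : ℝ) :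
    ∫ t : ℝ, Real.exp (-(w - t)^2 / (2*σ^2) - b/2 * (t^2 / lam)) =
      Real.exp (w^2/(4*σ^4*(1/(2*σ^2)+b/(2*lam))) - w^2/(2*σ^2)) *
        Real.sqrt (π / (1/(2*σ^2)+b/(2*lam))) := by
  have ha : (0:ℝ) < 1/(2*σ^2)+b/(2*lam) := by positivity
  have key : ∀ t : ℝ, -(w - t)^2 / (2*σ^2) - b/2 * (t^2 / lam)
      = (w^2/(4*σ^4*(1/(2*σ^2)+b/(2*lam))) - w^2/(2*σ^2)) +
        (-(1/(2*σ^2)+b/(2*lam)) * (t - w/(2*σ^2*(1/(2*σ^2)+b/(2*lam))))^2) := by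
    intro t
    field_simp
    ring
  simp_rw [key, Real.exp_add, MeasureTheory.integral_const_mul]
  rw [integral_sub_right_eq_self (μ := volume)
      (fun s => Real.exp (-(1/(2*σ^2)+b/(2*lam)) * s^2)) (w/(2*σ^2*(1/(2*σ^2)+b/(2*lam))))]
  rw [integral_gaussian]


lemma integral_comp_mulVec_eq {n : ℕ} {U : Matrix (Fin n) (Fin n) ℝ}
    (hU1 : U * star U = 1) (hU2 : star U * U = 1) (f : (Fin n → ℝ) → ℝ) :
    ∫ v : Fin n → ℝ, f (U *ᵥ v) = ∫ u : Fin n → ℝ, f u := by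
  have hds : (star U).det = U.det := by
    simp [Matrix.star_eq_conjTranspose, Matrix.det_conjTranspose]
  have h1 : U.det * U.det = 1 := by
    have := congrArg Matrix.det hU1
    rwa [Matrix.det_mul, Matrix.det_one, hds] at this
  have hdet : |U.det| = 1 := by
    rcases mul_self_eq_one_iff.mp h1 with h | h <;> simp [h]
  have hdet0 : U.det ≠ 0 := fun h => by simp [h] at hdet
  have hmp : MeasurePreserving (Matrix.toLin' U) (volume : Measure (Fin n → ℝ)) volume := by
    constructor
    · exact LinearMap.continuous_on_pi _ |>.measurable
    · rw [Real.map_matrix_volume_pi_eq_smul_volume_pi hdet0, abs_inv, hdet]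
      simp
  have hemb : MeasurableEmbedding (Matrix.toLin' U) :=
    (Matrix.toLin'OfInv hU2 hU1).toContinuousLinearEquiv.toHomeomorph.measurableEmbedding
  exact hmp.integral_comp hemb f

lemma conj_diag_inv {n : ℕ} {U : Matrix (Fin n) (Fin n) ℝ}
    (hU1 : U * star U = 1) (hU2 : star U * U = 1) {μ : Fin n → ℝ} (hμ : ∀ i, μ i ≠ 0) :
    (U * Matrix.diagonal μ * star U)⁻¹ = U * Matrix.diagonal (fun i => (μ i)⁻¹) * star U := by
  apply Matrix.inv_eq_right_inv
  have : Matrix.diagonal μ * Matrix.diagonal (fun i => (μ i)⁻¹) = 1 := by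
    rw [Matrix.diagonal_mul_diagonal]
    convert Matrix.diagonal_one
    exact mul_inv_cancel₀ (hμ _)
  calc (U * Matrix.diagonal μ * star U) * (U * Matrix.diagonal (fun i => (μ i)⁻¹) * star U)
      = U * (Matrix.diagonal μ * ((star U * U) * Matrix.diagonal (fun i => (μ i)⁻¹))) * star U := by
        simp only [Matrix.mul_assoc]
    _ = 1 := by rw [hU2, one_mul, this, mul_one, hU1]

lemma mulVec_dot {n : ℕ} {U : Matrix (Fin n) (Fin n) ℝ} (hU2 : star U * U = 1)
    (x y : Fin n → ℝ) : (U *ᵥ x) ⬝ᵥ (U *ᵥ y) = x ⬝ᵥ y := by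
  rw [Matrix.dotProduct_mulVec, ← Matrix.vecMul_transpose, Matrix.vecMul_vecMul,
      ← Matrix.conjTranspose_eq_transpose_of_trivial, ← Matrix.star_eq_conjTranspose, hU2,
      Matrix.vecMul_one]


lemma integral_eval {M : ℕ} {U : Matrix (Fin M) (Fin M) ℝ}
    (hU1 : U * star U = 1) (hU2 : star U * U = 1)
    {lam : Fin M → ℝ} (hlam : ∀ i, 0 < lam i)
    {S : Matrix (Fin M) (Fin M) ℝ} (hspec : S = U * Matrix.diagonal lam * star U)
    {σ : ℝ} (hσ : 0 < σ) (d : Fin M → ℝ) {b : ℝ} (hb : 0 < b) :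
    (∫ uhat : Fin M → ℝ,
        ((2 * π * σ^2) ^ (-(M:ℝ)/2) *
            Real.exp (-(∑ i, (d i - uhat i)^2) / (2 * σ^2))) *
          ((2 * π) ^ (-(M:ℝ)/2) * (b ^ (-(M:ℝ)) * S.det) ^ (-(1:ℝ)/2) *
            Real.exp (-(b/2) * (uhat ⬝ᵥ (S⁻¹ *ᵥ uhat))))) =
      ((2 * π * σ^2) ^ (-(M:ℝ)/2) * ((2 * π) ^ (-(M:ℝ)/2) * (b ^ (-(M:ℝ)) * S.det) ^ (-(1:ℝ)/2))) *
      ∏ i, (Real.exp (((star U *ᵥ d) i)^2/(4*σ^4*(1/(2*σ^2)+b/(2*lam i))) -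
              ((star U *ᵥ d) i)^2/(2*σ^2)) *
        Real.sqrt (π / (1/(2*σ^2)+b/(2*lam i)))) := by
  set w := star U *ᵥ d with hw
  have hSinv : S⁻¹ = U * Matrix.diagonal (fun i => (lam i)⁻¹) * star U := by
    rw [hspec]; exact conj_diag_inv hU1 hU2 (fun i => (hlam i).ne')
  rw [← integral_comp_mulVec_eq hU1 hU2]
  have hUw : U *ᵥ w = d := by
    rw [hw, Matrix.mulVec_mulVec, hU1, Matrix.one_mulVec]
  have hpt : ∀ v : Fin M → ℝ,
      ((2 * π * σ^2) ^ (-(M:ℝ)/2) *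
            Real.exp (-(∑ i, (d i - (U *ᵥ v) i)^2) / (2 * σ^2))) *
          ((2 * π) ^ (-(M:ℝ)/2) * (b ^ (-(M:ℝ)) * S.det) ^ (-(1:ℝ)/2) *
            Real.exp (-(b/2) * ((U *ᵥ v) ⬝ᵥ (S⁻¹ *ᵥ (U *ᵥ v))))) =
      ((2 * π * σ^2) ^ (-(M:ℝ)/2) * ((2 * π) ^ (-(M:ℝ)/2) * (b ^ (-(M:ℝ)) * S.det) ^ (-(1:ℝ)/2))) *
        ∏ i, Real.exp (-(w i - v i)^2 / (2*σ^2) - b/2 * ((v i)^2 / lam i)) := by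
    intro v
    have hsq : ∀ x : Fin M → ℝ, ∑ i, (x i)^2 = x ⬝ᵥ x := by
      intro x; simp [dotProduct, sq]
    have hsum : ∑ i, (d i - (U *ᵥ v) i)^2 = ∑ i, (w i - v i)^2 := by
      have h1 : (fun i => d i - (U *ᵥ v) i) = (U *ᵥ (w - v)) := by
        rw [Matrix.mulVec_sub, hUw]; rfl
      calc ∑ i, (d i - (U *ᵥ v) i)^2 = (U *ᵥ (w - v)) ⬝ᵥ (U *ᵥ (w - v)) := by
            rw [← hsq]; rw [← h1]
        _ = (w - v) ⬝ᵥ (w - v) := mulVec_dot hU2 _ _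
        _ = ∑ i, (w i - v i)^2 := by rw [← hsq]; rfl
    have hquad : (U *ᵥ v) ⬝ᵥ (S⁻¹ *ᵥ (U *ᵥ v)) = ∑ i, (lam i)⁻¹ * (v i)^2 := by
      have h2 : S⁻¹ *ᵥ (U *ᵥ v) = U *ᵥ (Matrix.diagonal (fun i => (lam i)⁻¹) *ᵥ v) := by
        rw [hSinv, Matrix.mulVec_mulVec, Matrix.mul_assoc, Matrix.mul_assoc, hU2, mul_one,
          ← Matrix.mulVec_mulVec]
      rw [h2, mulVec_dot hU2]
      simp [dotProduct, Matrix.mulVec_diagonal, sq]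
      exact Finset.sum_congr rfl fun i _ => by ring
    rw [hsum, hquad]
    rw [← Real.exp_sum]
    have harith : (-(∑ i, (w i - v i)^2) / (2 * σ^2)) + (-(b/2) * (∑ i, (lam i)⁻¹ * (v i)^2))
        = ∑ i, (-(w i - v i)^2 / (2*σ^2) - b/2 * ((v i)^2 / lam i)) := by
      have hterm : ∀ i, -(w i - v i)^2 / (2*σ^2) - b/2 * ((v i)^2 / lam i)
          = (-(1/(2*σ^2))) * (w i - v i)^2 + (-(b/2)) * ((lam i)⁻¹ * (v i)^2) := by
        intro i
        have h0 := (hlam i).ne'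
        field_simp
        ring
      rw [Finset.sum_congr rfl (fun i _ => hterm i), Finset.sum_add_distrib,
        ← Finset.mul_sum, ← Finset.mul_sum]
      ring
    rw [← harith, Real.exp_add]
    ring
  simp only [hpt]
  rw [MeasureTheory.integral_const_mul,
     MeasureTheory.integral_fintype_prod_volume_eq_prod
       (fun i t => Real.exp (-(w i - t)^2 / (2*σ^2) - b/2 * (t^2 / lam i)))]
  congr 1
  exact Finset.prod_congr rfl fun i _ => gauss_one_dim hσ (hlam i) hb (w i)

theorem log_marginal_likelihood_deriv
    (M : ℕ) (S : Matrix (Fin M) (Fin M) ℝ) (hS : S.PosDef)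
    (σ : ℝ) (hσ : 0 < σ) (d : Fin M → ℝ)
    (p : ℝ → ℝ) (hp : ∀ b > 0, 0 < p b) (hpdiff : ∀ b > 0, DifferentiableAt ℝ p b)
    (β : ℝ) (hβ : 0 < β)
    (L : ℝ → ℝ)
    (hL : ∀ b : ℝ, L b =
      Real.log (∫ uhat : Fin M → ℝ,
        ((2 * π * σ^2) ^ (-(M:ℝ)/2) *
            Real.exp (-(∑ i, (d i - uhat i)^2) / (2 * σ^2))) *
          ((2 * π) ^ (-(M:ℝ)/2) * (b ^ (-(M:ℝ)) * S.det) ^ (-(1:ℝ)/2) *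
            Real.exp (-(b/2) * (uhat ⬝ᵥ (S⁻¹ *ᵥ uhat))))) +
      Real.log (p b))
    (St : Matrix (Fin M) (Fin M) ℝ)
    (hSt : St = (β • S⁻¹ + (σ^2)⁻¹ • (1 : Matrix (Fin M) (Fin M) ℝ))⁻¹)
    (mt : Fin M → ℝ) (hmt : mt = (σ^2)⁻¹ • (St *ᵥ d)) :
    HasDerivAt L
      ((M:ℝ)/(2*β) + deriv (fun b => Real.log (p b)) β -
        (1/2) * (mt ⬝ᵥ (S⁻¹ *ᵥ mt)) - (1/2) * (S⁻¹ * St).trace) β := by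
  classical
  have hσ2 : (0:ℝ) < σ^2 := by positivity
  have hH : S.IsHermitian := hS.1
  obtain ⟨U, hU1, hU2, lam, hlam, hspec⟩ :
      ∃ U : Matrix (Fin M) (Fin M) ℝ, U * star U = 1 ∧ star U * U = 1 ∧
        ∃ lam : Fin M → ℝ, (∀ i, 0 < lam i) ∧ S = U * Matrix.diagonal lam * star U := by
    refine ⟨hH.eigenvectorUnitary, Matrix.mem_unitaryGroup_iff.mp (hH.eigenvectorUnitary).2,
      Matrix.mem_unitaryGroup_iff'.mp (hH.eigenvectorUnitary).2,
      hH.eigenvalues, hS.eigenvalues_pos, ?_⟩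
    simpa [RCLike.ofReal_real_eq_id] using hH.spectral_theorem
  set w := star U *ᵥ d with hw
  have hapos : ∀ (i : Fin M) (b : ℝ), 0 < b → 0 < 1/(2*σ^2) + b/(2*lam i) := by
    intro i b hb
    have := hlam i
    positivity
  -- matrix identities
  have hSinv : S⁻¹ = U * Matrix.diagonal (fun i => (lam i)⁻¹) * star U := by
    rw [hspec]; exact conj_diag_inv hU1 hU2 (fun i => (hlam i).ne')
  have hdpos : ∀ i, 0 < β * (lam i)⁻¹ + (σ^2)⁻¹ := by
    intro i
    have := hlam i
    positivity
  have hAb : β • S⁻¹ + (σ^2)⁻¹ • (1 : Matrix (Fin M) (Fin M) ℝ)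
      = U * Matrix.diagonal (fun i => β * (lam i)⁻¹ + (σ^2)⁻¹) * star U := by
    have h1 : (σ^2)⁻¹ • (1 : Matrix (Fin M) (Fin M) ℝ)
        = U * ((σ^2)⁻¹ • (1 : Matrix (Fin M) (Fin M) ℝ)) * star U := by
      rw [Matrix.mul_smul, Matrix.smul_mul, mul_one, hU1]
    have h2 : β • (U * Matrix.diagonal (fun i => (lam i)⁻¹) * star U)
        = U * (β • Matrix.diagonal (fun i => (lam i)⁻¹)) * star U := by
      rw [← Matrix.smul_mul, ← Matrix.mul_smul]
    rw [hSinv, h1, h2, ← Matrix.add_mul, ← Matrix.mul_add]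
    congr 1
    congr 1
    ext i j
    by_cases h : i = j
    · subst h; simp [Matrix.diagonal_apply_eq, Matrix.one_apply_eq]
    · simp [Matrix.diagonal_apply_ne _ h, Matrix.one_apply_ne h]
  have hStd : St = U * Matrix.diagonal (fun i => (β * (lam i)⁻¹ + (σ^2)⁻¹)⁻¹) * star U := by
    rw [hSt, hAb]
    exact conj_diag_inv hU1 hU2 (fun i => (hdpos i).ne')
  have htr : (S⁻¹ * St).trace = ∑ i, (lam i)⁻¹ * (β * (lam i)⁻¹ + (σ^2)⁻¹)⁻¹ := by
    rw [hSinv, hStd]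
    have : (U * Matrix.diagonal (fun i => (lam i)⁻¹) * star U) *
        (U * Matrix.diagonal (fun i => (β * (lam i)⁻¹ + (σ^2)⁻¹)⁻¹) * star U)
        = U * (Matrix.diagonal (fun i => (lam i)⁻¹) *
            Matrix.diagonal (fun i => (β * (lam i)⁻¹ + (σ^2)⁻¹)⁻¹)) * star U := by
      simp only [Matrix.mul_assoc]
      rw [← Matrix.mul_assoc (star U) U, hU2, Matrix.one_mul]
    rw [this, Matrix.trace_mul_cycle, hU2, Matrix.one_mul,
      Matrix.diagonal_mul_diagonal, Matrix.trace_diagonal]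
  have hdot : mt ⬝ᵥ (S⁻¹ *ᵥ mt)
      = ∑ i, ((σ^2)⁻¹)^2 * ((β * (lam i)⁻¹ + (σ^2)⁻¹)⁻¹ * w i)^2 * (lam i)⁻¹ := by
    set Dt := Matrix.diagonal (fun i => (β * (lam i)⁻¹ + (σ^2)⁻¹)⁻¹) with hDt
    have hStd' : St *ᵥ d = U *ᵥ (Dt *ᵥ w) := by
      rw [hStd, hw, Matrix.mulVec_mulVec, Matrix.mulVec_mulVec]
    have hSmv : S⁻¹ *ᵥ (U *ᵥ (Dt *ᵥ w))
        = U *ᵥ (Matrix.diagonal (fun i => (lam i)⁻¹) *ᵥ (Dt *ᵥ w)) := by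
      rw [hSinv, Matrix.mulVec_mulVec, Matrix.mul_assoc, Matrix.mul_assoc, hU2, mul_one,
        ← Matrix.mulVec_mulVec]
    rw [hmt, hStd', Matrix.mulVec_smul, hSmv, smul_dotProduct, dotProduct_smul,
      mulVec_dot hU2]
    simp only [smul_eq_mul, dotProduct, hDt, Matrix.mulVec_diagonal, Finset.mul_sum]
    exact Finset.sum_congr rfl fun i _ => by ring
  -- the closed form
  set F : ℝ → ℝ := fun b =>
    (Real.log ((2 * π * σ^2) ^ (-(M:ℝ)/2)) + Real.log ((2 * π) ^ (-(M:ℝ)/2)))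
    + (-(1:ℝ)/2) * ((-(M:ℝ)) * Real.log b + Real.log S.det)
    + (∑ i, ((w i)^2/(4*σ^4*(1/(2*σ^2)+b/(2*lam i))) - (w i)^2/(2*σ^2)
        + (Real.log π - Real.log (1/(2*σ^2)+b/(2*lam i)))/2))
    + Real.log (p b) with hF
  have hLF : ∀ b ∈ Set.Ioi (0:ℝ), L b = F b := by
    intro b hb
    rw [Set.mem_Ioi] at hb
    rw [hL b, integral_eval hU1 hU2 hlam hspec hσ d hb, hF]
    have hc1a : (0:ℝ) < (2 * π * σ^2) ^ (-(M:ℝ)/2) :=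
      Real.rpow_pos_of_pos (by positivity) _
    have hc1b : (0:ℝ) < (2 * π) ^ (-(M:ℝ)/2) :=
      Real.rpow_pos_of_pos (by positivity) _
    have hbM : (0:ℝ) < b ^ (-(M:ℝ)) := Real.rpow_pos_of_pos hb _
    have hc2 : (0:ℝ) < (b ^ (-(M:ℝ)) * S.det) ^ (-(1:ℝ)/2) :=
      Real.rpow_pos_of_pos (mul_pos hbM hS.det_pos) _
    have hPp  : ∀ i : Fin M, (0:ℝ) <
        Real.exp ((w i)^2/(4*σ^4*(1/(2*σ^2)+b/(2*lam i))) - (w i)^2/(2*σ^2)) *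
          Real.sqrt (π / (1/(2*σ^2)+b/(2*lam i))) := by
      intro i
      have h1 := hapos i b hb
      exact mul_pos (Real.exp_pos _) (Real.sqrt_pos.mpr (by positivity))
    have hP : (0:ℝ) < ∏ i, (Real.exp ((w i)^2/(4*σ^4*(1/(2*σ^2)+b/(2*lam i))) - (w i)^2/(2*σ^2)) *
          Real.sqrt (π / (1/(2*σ^2)+b/(2*lam i)))) :=
      Finset.prod_pos fun i _ => hPp i
    rw [Real.log_mul (by positivity) hP.ne', Real.log_mul hc1a.ne' (by positivity),
      Real.log_mul hc1b.ne' hc2.ne',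
      Real.log_rpow (mul_pos hbM hS.det_pos), Real.log_mul hbM.ne' hS.det_pos.ne',
      Real.log_rpow hb,
      Real.log_prod (fun i _ => (hPp i).ne')]
    have hsum : ∀ i : Fin M,
        Real.log (Real.exp ((w i)^2/(4*σ^4*(1/(2*σ^2)+b/(2*lam i))) - (w i)^2/(2*σ^2)) *
          Real.sqrt (π / (1/(2*σ^2)+b/(2*lam i))))
        = (w i)^2/(4*σ^4*(1/(2*σ^2)+b/(2*lam i))) - (w i)^2/(2*σ^2)
            + (Real.log π - Real.log (1/(2*σ^2)+b/(2*lam i)))/2 := by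
      intro i
      have h1 := hapos i b hb
      rw [Real.log_mul (Real.exp_ne_zero _) (Real.sqrt_pos.mpr (by positivity)).ne',
        Real.log_exp, Real.log_sqrt (by positivity),
        Real.log_div Real.pi_ne_zero h1.ne']
    rw [Finset.sum_congr rfl fun i _ => hsum i]
    ring
  -- derivative of F
  have hlogp : HasDerivAt (fun b => Real.log (p b)) (deriv (fun b => Real.log (p b)) β) β :=
    (((hpdiff β hβ).log (hp β hβ).ne')).hasDerivAt
  have hterm : ∀ i : Fin M, HasDerivAt
      (fun b => (w i)^2/(4*σ^4*(1/(2*σ^2)+b/(2*lam i))) - (w i)^2/(2*σ^2)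
        + (Real.log π - Real.log (1/(2*σ^2)+b/(2*lam i)))/2)
      ((0 * (4*σ^4*(1/(2*σ^2)+β/(2*lam i))) - (w i)^2 * (4*σ^4*(1/(2*lam i))))
          / (4*σ^4*(1/(2*σ^2)+β/(2*lam i)))^2
        + (0 - (1/(2*lam i))/(1/(2*σ^2)+β/(2*lam i)))/2) β := by
    intro i
    have hli := hlam i
    have ha : HasDerivAt (fun b : ℝ => 1/(2*σ^2) + b/(2*lam i)) (1/(2*lam i)) β := by
      exact ((hasDerivAt_id β).div_const (2*lam i)).const_add (1/(2*σ^2))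
    have haβ := hapos i β hβ
    have h4a : HasDerivAt (fun b : ℝ => 4*σ^4*(1/(2*σ^2)+b/(2*lam i)))
        (4*σ^4*(1/(2*lam i))) β := ha.const_mul _
    have hfrac := (hasDerivAt_const β ((w i)^2)).div h4a (by positivity)
    have hlog : HasDerivAt (fun b : ℝ => Real.log (1/(2*σ^2)+b/(2*lam i)))
        ((1/(2*lam i))/(1/(2*σ^2)+β/(2*lam i))) β := by
      exact ha.log haβ.ne'
    exact (hfrac.sub_const _).add (((hasDerivAt_const β (Real.log π)).sub hlog).div_const 2)
  have hFd : HasDerivAt F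
      (0 + (-(1:ℝ)/2) * ((-(M:ℝ)) * β⁻¹)
        + (∑ i, ((0 * (4*σ^4*(1/(2*σ^2)+β/(2*lam i))) - (w i)^2 * (4*σ^4*(1/(2*lam i))))
            / (4*σ^4*(1/(2*σ^2)+β/(2*lam i)))^2
          + (0 - (1/(2*lam i))/(1/(2*σ^2)+β/(2*lam i)))/2))
        + deriv (fun b => Real.log (p b)) β) β := by
    rw [hF]
    exact (((hasDerivAt_const β _).add
      ((((Real.hasDerivAt_log hβ.ne').const_mul (-(M:ℝ))).add_const (Real.log S.det)).const_mul
        (-(1:ℝ)/2))).add (HasDerivAt.fun_sum fun i _ => hterm i)).add hlogp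
  -- transfer to L and identify the derivative value
  have hLd : HasDerivAt L
      (0 + (-(1:ℝ)/2) * ((-(M:ℝ)) * β⁻¹)
        + (∑ i, ((0 * (4*σ^4*(1/(2*σ^2)+β/(2*lam i))) - (w i)^2 * (4*σ^4*(1/(2*lam i))))
            / (4*σ^4*(1/(2*σ^2)+β/(2*lam i)))^2
          + (0 - (1/(2*lam i))/(1/(2*σ^2)+β/(2*lam i)))/2))
        + deriv (fun b => Real.log (p b)) β) β := by
    refine hFd.congr_of_eventuallyEq ?_
    filter_upwards [Ioi_mem_nhds hβ] with b hb
    exact hLF b hb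
  have hkey : ∀ i : Fin M,
      (0 * (4*σ^4*(1/(2*σ^2)+β/(2*lam i))) - (w i)^2 * (4*σ^4*(1/(2*lam i))))
          / (4*σ^4*(1/(2*σ^2)+β/(2*lam i)))^2
        + (0 - (1/(2*lam i))/(1/(2*σ^2)+β/(2*lam i)))/2
      = (-(1/2)) * (((σ^2)⁻¹)^2 * ((β * (lam i)⁻¹ + (σ^2)⁻¹)⁻¹ * w i)^2 * (lam i)⁻¹)
        + (-(1/2)) * ((lam i)⁻¹ * (β * (lam i)⁻¹ + (σ^2)⁻¹)⁻¹) := by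
    intro i
    have hli := hlam i
    have haβ := hapos i β hβ
    have h2a : β * (lam i)⁻¹ + (σ^2)⁻¹ = 2 * (1/(2*σ^2)+β/(2*lam i)) := by
      field_simp
      ring
    rw [h2a]
    field_simp
    ring
  convert hLd using 1
  rw [htr, hdot, Finset.sum_congr rfl fun i _ => hkey i, Finset.sum_add_distrib,
    ← Finset.mul_sum, ← Finset.mul_sum]
  ring
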